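/- In the Hecke algebra H_q(S_n), the elements R_k(p) := p·T_k + (1−p) satisfy the Yang–Baxter relation: for parameters p_{a,b} := (z_b − z_a)/(z_b − q z_a) with a < b < c and any k ∈ [1, n−2], one has R_k(p_{a,b})·R_{k+1}(p_{a,c})·R_k(p_{b,c}) = R_{k+1}(p_{b,c})·R_k(p_{a,c})·R_{k+1}(p_{a,b}). -/

import Mathlib

/-- The simple transposition `s_k` (0-indexed: swaps `k` and `k+1`); identity if out of range. -/
def simpleS (n k : ℕ) : Equiv.Perm (Fin n) :=
  if h : k + 1 < n then Equiv.swap ⟨k, Nat.lt_of_succ_lt h⟩ ⟨k + 1, h⟩ else 1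

/-- `R(x,ρ) = ρ·x + (1-ρ)·1`. -/
def Rop {K : Type*} [Field K] {A : Type*} [Ring A] [Algebra K A] (x : A) (ρ : K) : A :=
  ρ • x + (1 - ρ) • (1 : A)

/-- The integrable parameter `p_{a,b} = (z_b - z_a)/(z_b - q z_a)`. -/
def pparam {K : Type*} [Field K] (q za zb : K) : K := (zb - za) / (zb - q * za)

lemma yb_abstract {K : Type*} [Field K] {A : Type*} [Ring A] [Algebra K A]
    (u v : A) (q p1 p2 p3 : K)
    (hu : u * u = (1 - q) • u + q • (1 : A))
    (hv : v * v = (1 - q) • v + q • (1 : A))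
    (hb : u * v * u = v * u * v)
    (hcoef : p1 * (1 - p2) * p3 * (1 - q) + p1 * (1 - p2) * (1 - p3)
        + (1 - p1) * (1 - p2) * p3 = (1 - p3) * p2 * (1 - p1)) :
    Rop u p1 * Rop v p2 * Rop u p3 = Rop v p3 * Rop u p2 * Rop v p1 := by
  unfold Rop
  simp only [mul_add, add_mul, smul_mul_assoc, mul_smul_comm, smul_smul, mul_one, one_mul]
  rw [hu, hv, hb]
  match_scalars <;> first | ring1 | linear_combination hcoef | linear_combination -hcoef

/-- The Yang–Baxter relation for the elements `R_k(p) = p·T_k + (1-p)` in the Hecke algebra: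
for `a < b < c` (with nonzero denominators) and adjacent generators `T_k, T_{k+1}`,
`R_k(p_{a,b}) R_{k+1}(p_{a,c}) R_k(p_{b,c}) = R_{k+1}(p_{b,c}) R_k(p_{a,c}) R_{k+1}(p_{a,b})`. -/
theorem stmt2 {K : Type*} [Field K] {A : Type*} [Ring A] [Algebra K A]
    {n : ℕ} (q : K) (T : Equiv.Perm (Fin n) → A) (z : Fin n → K)
    (k : ℕ) (hk : k + 2 < n)
    (Hbraid : T (simpleS n k) * T (simpleS n (k + 1)) * T (simpleS n k)
      = T (simpleS n (k + 1)) * T (simpleS n k) * T (simpleS n (k + 1)))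
    (Hquad : ∀ l : ℕ, l + 1 < n →
      (T (simpleS n l) + q • (1 : A)) * (T (simpleS n l) - 1) = 0)
    (a b c : Fin n) (hab : a < b) (hbc : b < c)
    (hden1 : z b - q * z a ≠ 0) (hden2 : z c - q * z a ≠ 0) (hden3 : z c - q * z b ≠ 0) :
    Rop (T (simpleS n k)) (pparam q (z a) (z b))
        * Rop (T (simpleS n (k + 1))) (pparam q (z a) (z c))
        * Rop (T (simpleS n k)) (pparam q (z b) (z c))
      = Rop (T (simpleS n (k + 1))) (pparam q (z b) (z c))
        * Rop (T (simpleS n k)) (pparam q (z a) (z c))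
        * Rop (T (simpleS n (k + 1))) (pparam q (z a) (z b)) := by
  set u := T (simpleS n k) with hud
  set v := T (simpleS n (k + 1)) with hvd
  have quad : ∀ w : A, (w + q • (1 : A)) * (w - 1) = 0 →
      w * w = (1 - q) • w + q • (1 : A) := by
    intro w h
    simp only [mul_sub, add_mul, smul_mul_assoc, one_mul, mul_one] at h
    linear_combination (norm := module) h
  have hu : u * u = (1 - q) • u + q • (1 : A) := quad u (Hquad k (by omega))
  have hv : v * v = (1 - q) • v + q • (1 : A) := quad v (Hquad (k + 1) (by omega))
  apply yb_abstract u v q _ _ _ hu hv Hbraid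
  have h1 := sub_ne_zero.mpr (fun h : z b = z a * q => hden1 (by rw [h]; ring))
  unfold pparam
  have h2 := sub_ne_zero.mpr (fun h : z c = z a * q => hden2 (by rw [h]; ring))
  have h3 := sub_ne_zero.mpr (fun h : z c = z b * q => hden3 (by rw [h]; ring))
  field_simp
  ring
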